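/- Let H = ℓ²(ℕ, ℝ), let (αₙ) be positive reals with Σₙ αₙ² < ∞, let b_Dir be the indicator function of the irrationals and B_Dir(x) = Σₙ αₙ b_Dir(xₙ) eₙ. Let x = (xₙ) ∈ H and suppose that for each n the continuous function Xₙ : [0,∞) → ℝ satisfies Xₙ(t) = xₙ + ∫₀ᵗ αₙ b_Dir(Xₙ(s)) ds for all t ≥ 0. Then for every t ≥ 0 the sequence X(t) := (Xₙ(t))ₙ belongs to H, the map t ↦ X(t) is continuous from [0,∞) to H, and X satisfies X(t) = x + ∫₀ᵗ B_Dir(X(s)) ds for all t ≥ 0, where the integral is a Bochner integral in H. -/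

import Mathlib

open MeasureTheory intervalIntegral ENNReal

/-- The Dirichlet function: indicator of the irrationals. -/
noncomputable def bDir : ℝ → ℝ := Set.indicator {x : ℝ | Irrational x} 1

lemma bDir_nonneg (y : ℝ) : 0 ≤ bDir y :=
  Set.indicator_nonneg (fun _ _ => zero_le_one) y

lemma bDir_le_one (y : ℝ) : bDir y ≤ 1 := by
  classical
  unfold bDir
  rw [Set.indicator_apply]
  split_ifs <;> simp

lemma measurable_bDir : Measurable bDir := by
  have h : MeasurableSet {x : ℝ | Irrational x} := by
    have : {x : ℝ | Irrational x} = (Set.range ((↑) : ℚ → ℝ))ᶜ := rfl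
    rw [this]
    exact ((Set.countable_range _).measurableSet).compl
  exact measurable_const.indicator h

lemma rpow_toReal_two (y : ℝ) : y ^ (2 : ℝ≥0∞).toReal = y ^ (2:ℕ) := by
  rw [show (2 : ℝ≥0∞).toReal = ((2:ℕ):ℝ) from by norm_num, Real.rpow_natCast]

lemma summable_sq_lp (f : lp (fun _ : ℕ => ℝ) 2) : Summable fun n => (f n) ^ 2 := by
  have h := (lp.memℓp f).summable (p := 2) (by norm_num)
  simpa [rpow_toReal_two, Real.norm_eq_abs, sq_abs] using h

lemma memℓ2_of_le {f g : ℕ → ℝ} (hg : Summable fun n => g n ^ 2) (h : ∀ n, |f n| ≤ g n) :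
    Memℓp f 2 := by
  apply memℓp_gen (p := 2)
  have hs : Summable fun n => (f n) ^ 2 := by
    refine hg.of_nonneg_of_le (fun n => sq_nonneg _) (fun n => ?_)
    calc (f n) ^ 2 = |f n| ^ 2 := (sq_abs _).symm
      _ ≤ g n ^ 2 := by nlinarith [h n, abs_nonneg (f n)]
  simpa [rpow_toReal_two, Real.norm_eq_abs, sq_abs] using hs

lemma ell2_norm_le_sqrt (f : lp (fun _ : ℕ => ℝ) 2) {g : ℕ → ℝ}
    (hg : Summable fun n => g n ^ 2) (h : ∀ n, |f n| ≤ g n) :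
    ‖f‖ ≤ Real.sqrt (∑' n, g n ^ 2) := by
  apply Real.le_sqrt_of_sq_le
  have h1 : ‖f‖ ^ (2 : ℝ≥0∞).toReal = ∑' n, ‖f n‖ ^ (2 : ℝ≥0∞).toReal :=
    lp.norm_rpow_eq_tsum (by norm_num) f
  simp only [rpow_toReal_two, Real.norm_eq_abs, sq_abs] at h1
  rw [h1]
  refine Summable.tsum_le_tsum (fun n => ?_) (summable_sq_lp f) hg
  calc (f n) ^ 2 = |f n| ^ 2 := (sq_abs _).symm
    _ ≤ g n ^ 2 := by nlinarith [h n, abs_nonneg (f n)]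

noncomputable def evalCLM (n : ℕ) : lp (fun _ : ℕ => ℝ) 2 →L[ℝ] ℝ :=
  LinearMap.mkContinuous
    { toFun := fun f => f n
      map_add' := fun f g => by
        have := lp.coeFn_add f g
        simp only []
        rw [show ⇑(f + g) = ⇑f + ⇑g from lp.coeFn_add f g]; rfl
      map_smul' := fun c f => by
        simp only []
        rw [show ⇑(c • f) = c • ⇑f from lp.coeFn_smul c f]; rfl }
    1 (fun f => by
      simpa using lp.norm_apply_le_norm (by norm_num : (2:ℝ≥0∞) ≠ 0) f n)

@[simp] lemma evalCLM_apply (n : ℕ) (f : lp (fun _ : ℕ => ℝ) 2) : evalCLM n f = f n := rfl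

/-- Let `H = ℓ²(ℕ, ℝ)`, `(αₙ)` positive with `Σ αₙ² < ∞`, and `B_Dir x = Σₙ αₙ bDir(xₙ) eₙ`.
If `x ∈ H` and for each `n` the continuous function `Xₙ : [0,∞) → ℝ` satisfies
`Xₙ(t) = xₙ + ∫₀ᵗ αₙ bDir(Xₙ(s)) ds`, then the sequence `X(t) = (Xₙ(t))ₙ` belongs to `H`
for each `t ≥ 0`, `t ↦ X(t)` is continuous from `[0,∞)` to `H`, and it satisfies
`X(t) = x + ∫₀ᵗ B_Dir(X(s)) ds` (Bochner integral in `H`) for all `t ≥ 0`. -/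
theorem stmt4 (α : ℕ → ℝ) (hα : ∀ n, 0 < α n) (hsum : Summable fun n => (α n) ^ 2)
    (B : lp (fun _ : ℕ => ℝ) 2 → lp (fun _ : ℕ => ℝ) 2)
    (hB : ∀ x : lp (fun _ : ℕ => ℝ) 2, ∀ n : ℕ, B x n = α n * bDir (x n))
    (x : lp (fun _ : ℕ => ℝ) 2)
    (X : ℕ → ℝ → ℝ)
    (hXcont : ∀ n, ContinuousOn (X n) (Set.Ici (0 : ℝ)))
    (hXeq : ∀ n, ∀ t : ℝ, 0 ≤ t →
      X n t = x n + ∫ s in (0:ℝ)..t, α n * bDir (X n s)) :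
    ∃ Y : ℝ → lp (fun _ : ℕ => ℝ) 2,
      (∀ t : ℝ, 0 ≤ t → ∀ n : ℕ, Y t n = X n t) ∧
      ContinuousOn Y (Set.Ici (0 : ℝ)) ∧
      ∀ t : ℝ, 0 ≤ t → Y t = x + ∫ s in (0:ℝ)..t, B (Y s) := by
  classical
  have hα0 : ∀ n, (0:ℝ) ≤ α n := fun n => (hα n).le
  have hbound : ∀ n y, |α n * bDir y| ≤ α n := by
    intro n y
    rw [abs_mul, abs_of_nonneg (hα0 n), abs_of_nonneg (bDir_nonneg y)]
    calc α n * bDir y ≤ α n * 1 := mul_le_mul_of_nonneg_left (bDir_le_one y) (hα0 n)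
      _ = α n := mul_one _
  have hmeasb : ∀ n (t : ℝ), AEStronglyMeasurable (fun s => α n * bDir (X n s))
      (volume.restrict (Set.Ioc (0:ℝ) t)) := by
    intro n t
    have hX : AEMeasurable (X n) (volume.restrict (Set.Ioc (0:ℝ) t)) :=
      ((hXcont n).mono (fun y hy => le_of_lt hy.1)).aemeasurable measurableSet_Ioc
    exact ((measurable_bDir.comp_aemeasurable hX).const_mul (α n)).aestronglyMeasurable
  have hint : ∀ n {t : ℝ}, 0 ≤ t →
      IntervalIntegrable (fun s => α n * bDir (X n s)) volume 0 t := by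
    intro n t ht
    rw [intervalIntegrable_iff_integrableOn_Ioc_of_le ht]
    refine Integrable.mono' (g := fun _ => α n) ?_ (hmeasb n t)
      (Filter.Eventually.of_forall fun s => by
        simpa only [Real.norm_eq_abs] using hbound n (X n s))
    exact integrableOn_const measure_Ioc_lt_top.ne
  have hXsub : ∀ n {s t : ℝ}, 0 ≤ s → s ≤ t →
      X n t - X n s = ∫ u in s..t, α n * bDir (X n u) := by
    intro n s t hs hst
    have h := intervalIntegral.integral_interval_sub_left (hint n (hs.trans hst)) (hint n hs)
    rw [hXeq n t (hs.trans hst), hXeq n s hs, ← h]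
    ring
  have hlip : ∀ n {s t : ℝ}, 0 ≤ s → s ≤ t → |X n t - X n s| ≤ α n * (t - s) := by
    intro n s t hs hst
    rw [hXsub n hs hst]
    have h := intervalIntegral.norm_integral_le_of_norm_le_const (a := s) (b := t) (C := α n)
      (f := fun u => α n * bDir (X n u)) (fun u _ => by
        simpa only [Real.norm_eq_abs] using hbound n (X n u))
    rwa [Real.norm_eq_abs, abs_of_nonneg (sub_nonneg.2 hst)] at h
  have hX0 : ∀ n, X n 0 = x n := fun n => by simpa using hXeq n 0 le_rfl
  have hlip0 : ∀ n {t : ℝ}, 0 ≤ t → |X n t - x n| ≤ α n * t := by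
    intro n t ht
    have h := hlip n le_rfl ht
    rwa [hX0 n, sub_zero] at h
  have hmem : ∀ t : ℝ, 0 ≤ t → Memℓp (fun n => X n t) 2 := by
    intro t ht
    have h1 : Memℓp (fun n => X n t - x n) 2 := by
      refine memℓ2_of_le (g := fun n => α n * t) ?_ (fun n => hlip0 n ht)
      simpa [mul_pow] using hsum.mul_right (t ^ 2)
    have h2 : (fun n => X n t) = (fun n : ℕ => x n) + fun n => X n t - x n := by
      funext n; simp
    rw [h2]
    exact (lp.memℓp x).add h1
  set Y : ℝ → lp (fun _ : ℕ => ℝ) 2 :=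
    fun t => if ht : 0 ≤ t then (⟨fun n => X n t, hmem t ht⟩ : lp (fun _ : ℕ => ℝ) 2) else 0
    with hYdef
  have hYapp : ∀ t : ℝ, 0 ≤ t → ∀ n : ℕ, Y t n = X n t := by
    intro t ht n
    simp only [hYdef, dif_pos ht]
  set A : ℝ := Real.sqrt (∑' n, α n ^ 2) with hA
  have hkey : ∀ {s t : ℝ}, 0 ≤ s → s ≤ t → ‖Y t - Y s‖ ≤ A * (t - s) := by
    intro s t hs hst
    have ht : (0:ℝ) ≤ t := hs.trans hst
    have hgsum : Summable fun n => (α n * (t - s)) ^ 2 := by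
      simpa [mul_pow] using hsum.mul_right ((t - s) ^ 2)
    have hb : ∀ n, |(Y t - Y s) n| ≤ α n * (t - s) := by
      intro n
      rw [show ⇑(Y t - Y s) = ⇑(Y t) - ⇑(Y s) from lp.coeFn_sub _ _, Pi.sub_apply,
        hYapp t ht n, hYapp s hs n]
      exact hlip n hs hst
    refine (ell2_norm_le_sqrt (Y t - Y s) hgsum hb).trans (le_of_eq ?_)
    simp only [mul_pow]
    rw [tsum_mul_right, Real.sqrt_mul (tsum_nonneg fun n => sq_nonneg _),
      Real.sqrt_sq (sub_nonneg.2 hst)]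
  have hYcont : ContinuousOn Y (Set.Ici (0:ℝ)) := by
    refine LipschitzOnWith.continuousOn (K := A.toNNReal) ?_
    refine LipschitzOnWith.of_dist_le_mul ?_
    intro t ht s hs
    have hAco : (A.toNNReal : ℝ) = A := Real.coe_toNNReal _ (Real.sqrt_nonneg _)
    rcases le_total s t with h | h
    · rw [dist_eq_norm, Real.dist_eq, abs_of_nonneg (sub_nonneg.2 h), hAco]
      exact hkey hs h
    · rw [dist_eq_norm, Real.dist_eq, abs_of_nonpos (sub_nonpos.2 h), hAco, norm_sub_rev]
      simpa using hkey ht h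
  refine ⟨Y, hYapp, hYcont, ?_⟩
  intro t ht
  have hBnorm : ∀ y, ‖B y‖ ≤ A := by
    intro y
    refine ell2_norm_le_sqrt (B y) hsum (fun n => ?_)
    rw [hB y n]
    exact hbound n (y n)
  have hmeasB : AEStronglyMeasurable (fun s => B (Y s)) (volume.restrict (Set.Ioc (0:ℝ) t)) := by
    have hg : ∀ N : ℕ, AEStronglyMeasurable
        (fun s => ∑ k ∈ Finset.range N, (α k * bDir (X k s)) • lp.single 2 k (1:ℝ))
        (volume.restrict (Set.Ioc (0:ℝ) t)) := by
      intro N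
      refine Finset.aestronglyMeasurable_fun_sum _ (fun k _ => ?_)
      exact (hmeasb k t).smul aestronglyMeasurable_const
    refine aestronglyMeasurable_of_tendsto_ae Filter.atTop hg ?_
    filter_upwards [ae_restrict_mem measurableSet_Ioc] with s hs
    have hs0 : (0:ℝ) ≤ s := hs.1.le
    have h1 : ∀ k : ℕ, (α k * bDir (X k s)) • lp.single 2 k (1:ℝ)
        = lp.single (E := fun _ : ℕ => ℝ) 2 k ((B (Y s)) k) := by
      intro k
      apply lp.ext
      funext j
      rw [show ⇑((α k * bDir (X k s)) • lp.single 2 k (1:ℝ))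
          = (α k * bDir (X k s)) • ⇑(lp.single (E := fun _ : ℕ => ℝ) 2 k (1:ℝ))
          from lp.coeFn_smul _ _, Pi.smul_apply]
      by_cases hj : j = k
      · subst hj
        rw [lp.single_apply_self, lp.single_apply_self, hB (Y s) j, hYapp s hs0 j]
        simp
      · rw [lp.single_apply_ne _ _ _ hj, lp.single_apply_ne _ _ _ hj]
        simp
    have h2 := (lp.hasSum_single (p := 2) (by norm_num) (B (Y s))).tendsto_sum_nat
    exact h2.congr fun N => (Finset.sum_congr rfl fun k _ => (h1 k).symm)
  have hIntB : IntervalIntegrable (fun s => B (Y s)) volume 0 t := by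
    rw [intervalIntegrable_iff_integrableOn_Ioc_of_le ht]
    refine Integrable.mono' (g := fun _ => A) ?_ hmeasB
      (Filter.Eventually.of_forall fun s => hBnorm (Y s))
    exact integrableOn_const measure_Ioc_lt_top.ne
  apply lp.ext
  funext n
  rw [show ⇑(x + ∫ s in (0:ℝ)..t, B (Y s)) = ⇑x + ⇑(∫ s in (0:ℝ)..t, B (Y s))
    from lp.coeFn_add _ _, Pi.add_apply, hYapp t ht n, hXeq n t ht]
  congr 1
  have hev := (evalCLM n).intervalIntegral_comp_comm hIntB
  have h3 : (∫ s in (0:ℝ)..t, B (Y s)) n = ∫ s in (0:ℝ)..t, (B (Y s)) n := hev.symm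
  rw [h3]
  refine intervalIntegral.integral_congr (fun s hs => ?_)
  rw [Set.uIcc_of_le ht] at hs
  rw [hB (Y s) n, hYapp s hs.1 n]
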